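/- Let K be a number field with at least one real embedding. Then there exists an algebraic integer α ∈ O_K with K = Q(α) and H(α) ≤ c_K = (2/π)^{s/d}|Δ_K|^{1/(2d)}. -/

import Mathlib

open NumberField

/-- `c_K = (2/π)^{s/d} |Δ_K|^{1/(2d)}`. -/
noncomputable def minkowskiConst (K : Type*) [Field K] [NumberField K] : ℝ :=
  (2 / Real.pi) ^ ((InfinitePlace.nrComplexPlaces K : ℝ) / (Module.finrank ℚ K)) *
    |(discr K : ℝ)| ^ ((1 : ℝ) / (2 * (Module.finrank ℚ K : ℝ)))

/-- Absolute multiplicative Weil height of an algebraic integer of `K`. -/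
noncomputable def intHeight {K : Type*} [Field K] [NumberField K] (α : K) : ℝ :=
  (∏ φ : K →+* ℂ, max 1 (‖φ α‖)) ^ ((Module.finrank ℚ K : ℝ)⁻¹)

/-- The normalized absolute value `|·|_v = ‖·‖_v^{d_v/d}` at an infinite place. -/
noncomputable def placeNorm {K : Type*} [Field K] [NumberField K]
    (v : InfinitePlace K) (α : K) : ℝ :=
  (v α) ^ ((v.mult : ℝ) / (Module.finrank ℚ K : ℝ))

open scoped Classical in
theorem aux_prod_max_eq {K : Type*} [Field K] [NumberField K] (x : K) :
    ∏ φ : K →+* ℂ, max 1 ‖φ x‖ =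
      ∏ w : InfinitePlace K, (max 1 (w x)) ^ w.mult := by
  rw [← Finset.prod_fiberwise Finset.univ InfinitePlace.mk
    (fun φ => max 1 ‖φ x‖)]
  refine Finset.prod_congr rfl fun w _ => ?_
  have h (φ : K →+* ℂ) (hφ : φ ∈ ({φ | InfinitePlace.mk φ = w} : Finset _)) :
      max 1 ‖φ x‖ = max 1 (w x) := by
    rw [← (Finset.mem_filter.mp hφ).2, InfinitePlace.apply]
  rw [Finset.prod_congr rfl h, Finset.prod_const, InfinitePlace.card_filter_mk_eq]

theorem aux_mbound_toReal (K : Type*) [Field K] [NumberField K] :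
    (mixedEmbedding.minkowskiBound K ↑1).toReal =
      (mixedEmbedding.convexBodyLTFactor K : ℝ) *
        ((2 / Real.pi) ^ (InfinitePlace.nrComplexPlaces K) *
          Real.sqrt |(discr K : ℝ)|) := by
  have hπ : (0:ℝ) < Real.pi := Real.pi_pos
  have hd := InfinitePlace.card_add_two_mul_card_eq_rank K
  simp_rw [mixedEmbedding.minkowskiBound,
    mixedEmbedding.volume_fundamentalDomain_fractionalIdealLatticeBasis,
    mixedEmbedding.volume_fundamentalDomain_latticeBasis, ENNReal.toReal_mul,
    ENNReal.toReal_pow, ENNReal.toReal_inv, ENNReal.toReal_ofNat, ENNReal.coe_toReal,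
    mixedEmbedding.finrank, Units.val_one, FractionalIdeal.absNorm_one, Rat.cast_one,
    ENNReal.toReal_ofReal (zero_le_one (α := ℝ)), one_mul]
  simp only [Real.coe_sqrt, coe_nnnorm, Int.norm_eq_abs, Int.cast_abs]
  rw [mixedEmbedding.convexBodyLTFactor, NNReal.coe_mul, NNReal.coe_pow, NNReal.coe_pow,
    NNReal.coe_real_pi, NNReal.coe_ofNat]
  rw [← hd, pow_add, pow_mul]
  have hπ' : Real.pi ≠ 0 := ne_of_gt hπ
  field_simp
  ring_nf
  rw [show (4:ℝ) = 2^2 by norm_num, ← pow_mul]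
  simp only [inv_pow, one_div]
  field_simp
  ring

/-- `minkowskiConst K ^ d = (2/π)^s √|Δ|`. -/
theorem aux_const_pow (K : Type*) [Field K] [NumberField K] :
    minkowskiConst K ^ (Module.finrank ℚ K) =
      (2 / Real.pi) ^ (InfinitePlace.nrComplexPlaces K) * Real.sqrt |(discr K : ℝ)| := by
  have hπ : (0:ℝ) ≤ 2 / Real.pi := by positivity
  have hd0 : (Module.finrank ℚ K : ℝ) ≠ 0 := Nat.cast_ne_zero.mpr Module.finrank_pos.ne'
  have h2 : (1:ℝ)/(2*(Module.finrank ℚ K : ℝ)) * (Module.finrank ℚ K : ℝ) = 1/2 := by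
    field_simp
  rw [minkowskiConst, mul_pow,
    ← Real.rpow_natCast ((2 / Real.pi) ^ ((InfinitePlace.nrComplexPlaces K : ℝ) / (Module.finrank ℚ K))),
    ← Real.rpow_natCast (|(discr K : ℝ)| ^ ((1:ℝ) / (2 * (Module.finrank ℚ K : ℝ)))),
    ← Real.rpow_mul hπ, ← Real.rpow_mul (abs_nonneg _), div_mul_cancel₀ _ hd0, h2,
    ← Real.sqrt_eq_rpow, Real.rpow_natCast]

open scoped IntermediateField in
theorem aux_extract (K : Type*) [Field K] [NumberField K] {w₀ : InfinitePlace K}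
    (hw₀ : w₀.IsReal) {B : NNReal}
    (hB : mixedEmbedding.minkowskiBound K ↑1 < mixedEmbedding.convexBodyLTFactor K * B) :
    ∃ a : 𝓞 K, a ≠ 0 ∧ ℚ⟮(a : K)⟯ = ⊤ ∧ (∀ w, w ≠ w₀ → w (a : K) < 1) ∧ w₀ (a : K) < B := by
  classical
  have h : mixedEmbedding.minkowskiBound K ↑1 <
      MeasureTheory.volume
        (mixedEmbedding.convexBodyLT K (fun w ↦ if w = w₀ then B else 1)) := by
    rw [mixedEmbedding.convexBodyLT_volume,
      ← Finset.prod_erase_mul _ _ (Finset.mem_univ w₀)]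
    simp_rw [ite_pow, one_pow]
    rw [Finset.prod_ite_eq']
    simp_rw [Finset.notMem_erase, ite_false, InfinitePlace.mult, hw₀, ite_true, one_mul,
      pow_one]
    exact hB
  obtain ⟨a, h_nz, h_le⟩ := mixedEmbedding.exists_ne_zero_mem_ringOfIntegers_lt K h
  refine ⟨a, h_nz, ?_, fun w hw => ?_, ?_⟩
  · exact NumberField.is_primitive_element_of_infinitePlace_lt h_nz
      (fun w h_ne ↦ by convert (if_neg h_ne) ▸ h_le w; simp) (Or.inl hw₀)
  · have := h_le w
    rwa [if_neg hw, NNReal.coe_one] at this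
  · have := h_le w₀
    rwa [if_pos rfl] at this

/-- Theorem 1.1: if $K$ has a real embedding, then there is $\alpha\in O_K$ with
$K=\mathbb{Q}(\alpha)$ and $H(\alpha)\le c_K$. -/
theorem statement12 (K : Type*) [Field K] [NumberField K]
    (hreal : ∃ v : InfinitePlace K, v.IsReal) :
    ∃ α : 𝓞 K, IntermediateField.adjoin ℚ {(α : K)} = ⊤ ∧
      intHeight (α : K) ≤ minkowskiConst K := by
  classical
  obtain ⟨w₀, hw₀⟩ := hreal
  set d := Module.finrank ℚ K with hd
  set D : ℝ := (2 / Real.pi) ^ (InfinitePlace.nrComplexPlaces K) *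
      Real.sqrt |(discr K : ℝ)| with hD
  have hD0 : 0 ≤ D := by positivity
  set F := mixedEmbedding.convexBodyLTFactor K with hF
  have hF0 : (0:ℝ) < F := NNReal.coe_pos.mpr (pos_iff_ne_zero.mpr
    (mixedEmbedding.convexBodyLTFactor_ne_zero K))
  have hmb_ne_top : mixedEmbedding.minkowskiBound K ↑1 ≠ ⊤ :=
    ne_of_lt (mixedEmbedding.minkowskiBound_lt_top K ↑1)
  -- criterion for the Minkowski hypothesis
  have hcrit : ∀ B : NNReal, D < (B:ℝ) →
      mixedEmbedding.minkowskiBound K ↑1 < mixedEmbedding.convexBodyLTFactor K * B := by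
    intro B hDB
    have hne : (mixedEmbedding.convexBodyLTFactor K * B : ENNReal) ≠ ⊤ := by
      exact ENNReal.mul_ne_top ENNReal.coe_ne_top ENNReal.coe_ne_top
    rw [← ENNReal.toReal_lt_toReal hmb_ne_top hne, aux_mbound_toReal, ENNReal.toReal_mul,
      ENNReal.coe_toReal, ENNReal.coe_toReal]
    exact mul_lt_mul_of_pos_left (hD ▸ hDB) hF0
  -- the finite set of candidates
  set S : Set (𝓞 K) := {a : 𝓞 K | a ≠ 0 ∧ IntermediateField.adjoin ℚ {(a : K)} = ⊤ ∧
      (∀ w, w ≠ w₀ → w (a : K) < 1) ∧ w₀ (a : K) < D + 1} with hS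
  have hSfin : S.Finite := by
    have hT := Embeddings.finite_of_norm_le K ℂ (D + 1)
    have : S ⊆ (fun a : 𝓞 K => (a : K)) ⁻¹'
        {x : K | IsIntegral ℤ x ∧ ∀ φ : K →+* ℂ, ‖φ x‖ ≤ D + 1} := by
      intro a ha
      refine ⟨RingOfIntegers.isIntegral_coe a, fun φ => ?_⟩
      rw [show ‖φ (a:K)‖ = (InfinitePlace.mk φ) (a : K) from rfl]
      by_cases h : InfinitePlace.mk φ = w₀
      · rw [h]; exact le_of_lt ha.2.2.2
      · exact le_trans (le_of_lt (ha.2.2.1 _ h)) (by linarith)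
    exact Set.Finite.subset (hT.preimage (fun x _ y _ h => RingOfIntegers.coe_injective h)) this
  have hSne : S.Nonempty := by
    obtain ⟨B, hBD, hB1⟩ : ∃ B : NNReal, D < (B:ℝ) ∧ (B:ℝ) ≤ D + 1 :=
      ⟨Real.toNNReal (D + 1), by rw [Real.coe_toNNReal _ (by linarith)]; linarith,
        by rw [Real.coe_toNNReal _ (by linarith)]⟩
    obtain ⟨a, h0, htop, hlt, hlt₀⟩ := aux_extract K hw₀ (hcrit B hBD)
    exact ⟨a, h0, htop, hlt, lt_of_lt_of_le hlt₀ hB1⟩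
  -- choose a minimizer of `w₀`
  obtain ⟨a, haS, hamin⟩ := Set.exists_min_image S (fun a => w₀ (a : K)) hSfin hSne
  obtain ⟨ha0, hatop, halt, haD1⟩ := haS
  -- the minimizer satisfies `w₀ a ≤ D`
  have hle : w₀ (a : K) ≤ D := by
    by_contra hcon
    push_neg at hcon
    obtain ⟨B, hBD, hBa⟩ : ∃ B : NNReal, D < (B:ℝ) ∧ (B:ℝ) < w₀ (a : K) :=
      ⟨Real.toNNReal ((D + w₀ (a : K)) / 2),
        by rw [Real.coe_toNNReal _ (by positivity)]; linarith,
        by rw [Real.coe_toNNReal _ (by positivity)]; linarith⟩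
    obtain ⟨b, hb0, hbtop, hblt, hblt₀⟩ := aux_extract K hw₀ (hcrit B hBD)
    have hbS : b ∈ S := ⟨hb0, hbtop, hblt, by linarith⟩
    have := hamin b hbS
    linarith
  have h1le : 1 ≤ w₀ (a : K) :=
    NumberField.InfinitePlace.one_le_of_lt_one ha0 (fun z hz => halt z hz)
  refine ⟨a, hatop, ?_⟩
  -- compute the height
  have hprod : ∏ φ : K →+* ℂ, max 1 ‖φ (a : K)‖ = w₀ (a : K) := by
    rw [aux_prod_max_eq]
    rw [Finset.prod_eq_single w₀ (fun w _ hw => by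
        rw [max_eq_left (le_of_lt (halt w hw)), one_pow])
      (fun h => absurd (Finset.mem_univ w₀) h)]
    rw [max_eq_right h1le, InfinitePlace.mult, if_pos hw₀, pow_one]
  have hc0 : 0 ≤ minkowskiConst K := by
    unfold minkowskiConst
    positivity
  rw [intHeight, hprod]
  calc (w₀ (a : K)) ^ ((d : ℝ)⁻¹) ≤ D ^ ((d : ℝ)⁻¹) :=
        Real.rpow_le_rpow (by linarith) hle (by positivity)
    _ = (minkowskiConst K ^ d) ^ ((d : ℝ)⁻¹) := by rw [aux_const_pow]
    _ = minkowskiConst K := by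
        rw [← Real.rpow_natCast (minkowskiConst K) d, ← Real.rpow_mul hc0,
          mul_inv_cancel₀ (Nat.cast_ne_zero.mpr Module.finrank_pos.ne'),
          Real.rpow_one]
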